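/- arXiv:1312.1893 — 3 statements merged into one kernel-verified Lean document; each statement's English description precedes it below -/
import Mathlib

section
/- Let Γ be the Heisenberg group on A × ℤ as above, where the symplectic form ⟨·,·⟩ on A is nondegenerate. Let γ₀ = (a₀, z₀) be a noncentral element of Γ (equivalently a₀ ≠ 0). Then there exists a nonzero integer n₀ such that the conjugacy class 𝔎 of γ₀ satisfies {(0, n₀·n) : n ∈ ℤ} · γ₀ ⊆ 𝔎 ⊆ Z · γ₀, where Z = {0} × ℤ is the center of Γ. -/
/-- The Heisenberg group associated to an integral symplectic form `ω` on a free abelian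
group `A`: the underlying set is `A × ℤ`, with group law
`(a,z)(a',z') = (a+a', z+z'+ω a a')`. (For an alternating form `ω`, the inverse
`(-a, -z + ω a a)` is just `(-a, -z)`.) -/
structure Heis {A : Type*} [AddCommGroup A] (ω : A →ₗ[ℤ] A →ₗ[ℤ] ℤ) where
  fst : A
  snd : ℤ

namespace Heis

variable {A : Type*} [AddCommGroup A] {ω : A →ₗ[ℤ] A →ₗ[ℤ] ℤ}

def mul' (g h : Heis ω) : Heis ω := ⟨g.fst + h.fst, g.snd + h.snd + ω g.fst h.fst⟩

def inv' (g : Heis ω) : Heis ω := ⟨-g.fst, -g.snd + ω g.fst g.fst⟩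

theorem mul'_assoc (g h k : Heis ω) : mul' (mul' g h) k = mul' g (mul' h k) := by
  obtain ⟨a, z⟩ := g; obtain ⟨b, w⟩ := h; obtain ⟨c, u⟩ := k
  refine congrArg₂ Heis.mk ?_ ?_ <;>
    simp [mul', map_add, LinearMap.add_apply] <;> first | ring | abel

theorem one_mul' (g : Heis ω) : mul' ⟨0, 0⟩ g = g := by
  obtain ⟨a, z⟩ := g
  refine congrArg₂ Heis.mk ?_ ?_ <;> simp [mul']

theorem mul_one' (g : Heis ω) : mul' g ⟨0, 0⟩ = g := by
  obtain ⟨a, z⟩ := g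
  refine congrArg₂ Heis.mk ?_ ?_ <;> simp [mul']

theorem inv_mul_cancel' (g : Heis ω) : mul' (inv' g) g = ⟨0, 0⟩ := by
  obtain ⟨a, z⟩ := g
  refine congrArg₂ Heis.mk ?_ ?_ <;>
    simp [mul', inv', map_neg, LinearMap.neg_apply] <;> ring

instance : Group (Heis ω) where
  mul := mul'
  one := ⟨0, 0⟩
  inv := inv'
  mul_assoc := mul'_assoc
  one_mul := one_mul'
  mul_one := mul_one'
  inv_mul_cancel := inv_mul_cancel'

theorem mul_def (g h : Heis ω) :
    g * h = ⟨g.fst + h.fst, g.snd + h.snd + ω g.fst h.fst⟩ := rfl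

theorem inv_def (g : Heis ω) : g⁻¹ = ⟨-g.fst, -g.snd + ω g.fst g.fst⟩ := rfl

end Heis

/-- In the Heisenberg group `Γ = A × ℤ` over a nondegenerate alternating integral bilinear
form `ω` on a free abelian group `A` of rank `2k`, the conjugacy class `𝔎` of a noncentral
element `γ₀ = (a₀, z₀)` (i.e. `a₀ ≠ 0`) satisfies
`{(0, n₀ n) : n ∈ ℤ} · γ₀ ⊆ 𝔎 ⊆ Z · γ₀` for some nonzero integer `n₀`,
where `Z = {0} × ℤ` is the center. -/
theorem heisenberg_conjugacy_class_sandwich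
    {A : Type*} [AddCommGroup A] [Module.Free ℤ A] [Module.Finite ℤ A]
    (k : ℕ) (hrank : Module.finrank ℤ A = 2 * k)
    (ω : A →ₗ[ℤ] A →ₗ[ℤ] ℤ) (hω : ∀ a : A, ω a a = 0)
    (hnd : ∀ a : A, a ≠ 0 → ∃ b : A, ω a b ≠ 0)
    (a₀ : A) (z₀ : ℤ) (ha₀ : a₀ ≠ 0) :
    ∃ n₀ : ℤ, n₀ ≠ 0 ∧
      (∀ n : ℤ, ∃ g : Heis ω, g * ⟨a₀, z₀⟩ * g⁻¹ = (⟨0, n₀ * n⟩ : Heis ω) * ⟨a₀, z₀⟩) ∧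
      (∀ g : Heis ω, ∃ z : ℤ, g * ⟨a₀, z₀⟩ * g⁻¹ = (⟨0, z⟩ : Heis ω) * ⟨a₀, z₀⟩) := by
  have skew : ∀ a b : A, ω b a = -ω a b := by
    intro a b
    have h := hω (a + b)
    simp [map_add, hω] at h
    linarith
  have conj : ∀ g : Heis ω, g * ⟨a₀, z₀⟩ * g⁻¹ =
      (⟨0, 2 * ω g.fst a₀⟩ : Heis ω) * ⟨a₀, z₀⟩ := by
    intro g
    simp only [Heis.mul_def, Heis.inv_def, map_add, map_neg, map_zero,
      LinearMap.add_apply, LinearMap.neg_apply, LinearMap.zero_apply, hω]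
    refine congrArg₂ Heis.mk (by abel) ?_
    rw [skew a₀ g.fst]
    ring
  obtain ⟨b₀, hb₀⟩ := hnd a₀ ha₀
  refine ⟨2 * ω a₀ b₀, by simpa using hb₀, ?_, ?_⟩
  · intro n
    refine ⟨⟨-(n • b₀), 0⟩, ?_⟩
    rw [conj]
    congr 1
    simp only [map_neg, map_smul, LinearMap.neg_apply, LinearMap.smul_apply,
      smul_eq_mul, skew a₀ b₀]
    ring
  · intro g
    exact ⟨2 * ω g.fst a₀, conj g⟩
end

section
/- The function s ↦ 2·arsinh(cosh(s)·sinh(ℓ/2)) satisfies, as s → +∞, 2·arsinh(cosh(s)·sinh(ℓ/2)) = 2s + 2·log(sinh(ℓ/2)) + O(e^{−2s}); in particular the difference (2s+ℓ) − 2·arsinh(cosh(s)·sinh(ℓ/2)) is bounded by a constant depending only on ℓ > 0. -/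
/-- Asymptotics of `s ↦ 2 arsinh (cosh s · sinh (ℓ/2))`: it equals
`2s + 2 log (sinh (ℓ/2)) + O(e^{-2s})` as `s → +∞`, and in particular the difference
`(2s + ℓ) - 2 arsinh (cosh s · sinh (ℓ/2))` is bounded by a constant depending only on `ℓ`. -/
theorem arsinh_cosh_asymptotic (ℓ : ℝ) (hℓ : 0 < ℓ) :
    ∃ C : ℝ, 0 < C ∧ ∀ s : ℝ, 0 ≤ s →
      |2 * Real.arsinh (Real.cosh s * Real.sinh (ℓ / 2)) -
          (2 * s + 2 * Real.log (Real.sinh (ℓ / 2)))| ≤ C * Real.exp (-2 * s) ∧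
      (2 * s + ℓ) - 2 * Real.arsinh (Real.cosh s * Real.sinh (ℓ / 2)) ≤ C := by
  set a := Real.sinh (ℓ / 2) with ha_def
  have ha : 0 < a := Real.sinh_pos_iff.2 (by linarith)
  refine ⟨2 * (1 + 1 / a ^ 2) + |ℓ - 2 * Real.log a| + 1, by positivity, ?_⟩
  intro s hs
  set x := Real.cosh s * a with hx_def
  have hcosh : 0 < Real.cosh s := Real.cosh_pos s
  have hx : 0 < x := mul_pos hcosh ha
  have hes : (0:ℝ) < Real.exp s := Real.exp_pos s
  have hens : (0:ℝ) < Real.exp (-s) := Real.exp_pos (-s)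
  have hee : Real.exp s * Real.exp (-s) = 1 := by rw [← Real.exp_add]; simp
  have hcosh_eq : Real.cosh s = (Real.exp s + Real.exp (-s)) / 2 := Real.cosh_eq s
  have harsinh : Real.arsinh x = Real.log (x + Real.sqrt (1 + x ^ 2)) := by
    rw [← Real.log_exp (Real.arsinh x), Real.exp_arsinh]
  have hsqrt_ge : x ≤ Real.sqrt (1 + x ^ 2) := by
    calc x = Real.sqrt (x ^ 2) := by rw [Real.sqrt_sq hx.le]
    _ ≤ Real.sqrt (1 + x ^ 2) := Real.sqrt_le_sqrt (by linarith)
  have hsqrt_le : Real.sqrt (1 + x ^ 2) ≤ x + 1 / (2 * x) := by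
    rw [show x + 1 / (2 * x) = Real.sqrt ((x + 1 / (2 * x)) ^ 2) from
      (Real.sqrt_sq (by positivity)).symm]
    apply Real.sqrt_le_sqrt
    have : (x + 1 / (2 * x)) ^ 2 = x ^ 2 + 1 + (1 / (2 * x)) ^ 2 := by
      field_simp; ring
    nlinarith [sq_nonneg (1 / (2 * x))]
  have hexp_sla : Real.exp (s + Real.log a) = Real.exp s * a := by
    rw [Real.exp_add, Real.exp_log ha]
  -- lower bound for arsinh x
  have hlow : s + Real.log a ≤ Real.arsinh x := by
    rw [harsinh, ← Real.log_exp (s + Real.log a)]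
    apply Real.log_le_log (Real.exp_pos _)
    rw [hexp_sla]
    have h2x : Real.exp s * a ≤ 2 * x := by
      rw [hx_def, hcosh_eq]
      nlinarith
    linarith
  -- upper bound
  have hem : Real.exp s * Real.exp (-2 * s) = Real.exp (-s) := by
    rw [← Real.exp_add]; ring_nf
  have hinvx : 1 / (2 * x) ≤ Real.exp s * a * (1 / a ^ 2 * Real.exp (-2 * s)) := by
    have h2 : Real.exp s * a * (1 / a ^ 2 * Real.exp (-2 * s)) = Real.exp (-s) / a := by
      have hem' : Real.exp s * Real.exp (-(2 * s)) = Real.exp (-s) := by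
        rw [← Real.exp_add]; ring_nf
      field_simp
      nlinarith [hem']
    rw [h2, div_le_div_iff₀ (by positivity) ha]
    rw [hx_def, hcosh_eq]
    nlinarith [mul_pos (mul_pos hens hens) ha]
  have hup : Real.arsinh x ≤ s + Real.log a + (1 + 1 / a ^ 2) * Real.exp (-2 * s) := by
    rw [harsinh]
    have hbig : x + Real.sqrt (1 + x ^ 2) ≤
        Real.exp s * a * (1 + (1 + 1 / a ^ 2) * Real.exp (-2 * s)) := by
      have h2x : 2 * x ≤ Real.exp s * a + Real.exp s * a * Real.exp (-2 * s) := by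
        rw [hx_def, hcosh_eq]
        nlinarith [hem]
      nlinarith [hsqrt_le, hinvx]
    calc Real.log (x + Real.sqrt (1 + x ^ 2))
        ≤ Real.log (Real.exp s * a * (1 + (1 + 1 / a ^ 2) * Real.exp (-2 * s))) :=
          Real.log_le_log (by positivity) hbig
      _ = s + Real.log a + Real.log (1 + (1 + 1 / a ^ 2) * Real.exp (-2 * s)) := by
          rw [Real.log_mul (by positivity) (by positivity),
            Real.log_mul hes.ne' ha.ne', Real.log_exp]
      _ ≤ s + Real.log a + (1 + 1 / a ^ 2) * Real.exp (-2 * s) := by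
          have := Real.log_le_sub_one_of_pos
            (show (0:ℝ) < 1 + (1 + 1 / a ^ 2) * Real.exp (-2 * s) by positivity)
          linarith
  have hexp2 : (0:ℝ) < Real.exp (-2 * s) := Real.exp_pos _
  have hrest : 0 ≤ (|ℓ - 2 * Real.log a| + 1) * Real.exp (-2 * s) := by positivity
  have hCE : (2 * (1 + 1 / a ^ 2) + |ℓ - 2 * Real.log a| + 1) * Real.exp (-2 * s)
      = 2 * ((1 + 1 / a ^ 2) * Real.exp (-2 * s))
        + (|ℓ - 2 * Real.log a| + 1) * Real.exp (-2 * s) := by ring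
  have hF1 : 0 ≤ 2 * Real.arsinh x - (2 * s + 2 * Real.log a) := by linarith
  have hF2 : 2 * Real.arsinh x - (2 * s + 2 * Real.log a)
      ≤ 2 * ((1 + 1 / a ^ 2) * Real.exp (-2 * s)) := by linarith
  have hnn : 0 ≤ 2 * ((1 + 1 / a ^ 2) * Real.exp (-2 * s)) := by positivity
  refine ⟨abs_le.2 ⟨by linarith, by linarith⟩, ?_⟩
  have h1 : ℓ - 2 * Real.log a ≤ |ℓ - 2 * Real.log a| := le_abs_self _
  have h2 : 0 ≤ 2 * (1 + 1 / a ^ 2) := by positivity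
  linarith
end

section
/- A parabolic isometry γ of complex hyperbolic space ℍⁿ_ℂ fixing ∞, induced by a matrix of the form rows (1, a*, z₀), (0, A, b), (0,0,1) with A ∈ U(n−1) and Aa = b, is uniformly translating (i.e. d(y, γy) is constant on each horosphere centred at ∞) if and only if γ is a vertical Heisenberg translation (A = I and the translation part a = 0); and if γ is not a vertical Heisenberg translation, the displacement function y ↦ d(y, γy) is unbounded on every horosphere centred at ∞. -/
noncomputable section

/-- Inverse hyperbolic cosine. -/
def arcosh (x : ℝ) : ℝ := Real.log (x + Real.sqrt (x ^ 2 - 1))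

/-- The Hermitian form of signature `(1,n)` on `ℂ^{n+1} = ℂ × ℂ^{n-1} × ℂ`:
`⟨z,w⟩ = -z₀ conj(wₙ) + z·conj(w) - zₙ conj(w₀)`. -/
def herm {m : ℕ} (x y : ℂ × EuclideanSpace ℂ (Fin m) × ℂ) : ℂ :=
  -x.1 * (starRingEnd ℂ) y.2.2 + (inner ℂ y.2.1 x.2.1 : ℂ) - x.2.2 * (starRingEnd ℂ) y.1

/-- The distance in the projective model of complex hyperbolic space:
`d(X,Y) = arcosh √(⟨x,y⟩⟨y,x⟩ / (q(x) q(y)))` for lifts `x, y`. -/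
def chDist {m : ℕ} (x y : ℂ × EuclideanSpace ℂ (Fin m) × ℂ) : ℝ :=
  arcosh (Real.sqrt (Complex.normSq (herm x y) / ((herm x x).re * (herm y y).re)))

/-- The parabolic isometry of `ℍⁿ_ℂ` fixing `∞` induced by the matrix with rows
`(1, a*, z₀)`, `(0, A, Aa)`, `(0, 0, 1)`, acting on lifts. -/
def parab {m : ℕ} (z₀ : ℂ) (a : EuclideanSpace ℂ (Fin m))
    (A : EuclideanSpace ℂ (Fin m) →ₗ[ℂ] EuclideanSpace ℂ (Fin m))
    (W : ℂ × EuclideanSpace ℂ (Fin m) × ℂ) : ℂ × EuclideanSpace ℂ (Fin m) × ℂ :=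
  (W.1 + (inner ℂ a W.2.1 : ℂ) + z₀ * W.2.2, A W.2.1 + W.2.2 • A a, W.2.2)

open scoped InnerProductSpace ComplexConjugate

lemma herm_self_pt {m : ℕ} (w₀ : ℂ) (w : EuclideanSpace ℂ (Fin m)) :
    herm (w₀, w, 1) (w₀, w, 1) = -w₀ - conj w₀ + ⟪w, w⟫_ℂ := by
  simp [herm]; ring

lemma herm_parab_pt {m : ℕ} (z₀ : ℂ) (a w : EuclideanSpace ℂ (Fin m))
    (A : EuclideanSpace ℂ (Fin m) →ₗ[ℂ] EuclideanSpace ℂ (Fin m)) (w₀ : ℂ) :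
    herm (w₀, w, 1) (parab z₀ a A (w₀, w, 1))
      = (-w₀ - conj w₀ + ⟪w, w⟫_ℂ)
        + (⟪A w, w⟫_ℂ - ⟪w, w⟫_ℂ + ⟪A a, w⟫_ℂ - ⟪w, a⟫_ℂ) - conj z₀ := by
  have h := (inner_conj_symm (𝕜 := ℂ) w a)
  simp [herm, parab, inner_add_left, map_add]
  rw [← h]
  ring

lemma g_unbounded {m : ℕ} (A : EuclideanSpace ℂ (Fin m) →ₗ[ℂ] EuclideanSpace ℂ (Fin m))
    (a : EuclideanSpace ℂ (Fin m)) (h : ¬(A = LinearMap.id ∧ a = 0)) (K : ℝ) :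
    ∃ w : EuclideanSpace ℂ (Fin m),
      K ≤ ‖⟪A w, w⟫_ℂ - ⟪w, w⟫_ℂ + ⟪A a, w⟫_ℂ - ⟪w, a⟫_ℂ‖ := by
  by_cases hA : A = LinearMap.id
  · have ha : a ≠ 0 := fun h0 => h ⟨hA, h0⟩
    subst hA
    have hna : (0:ℝ) < ‖a‖ ^ 2 := by
      have := norm_pos_iff.mpr ha
      positivity
    set t : ℝ := max 0 (K / (2 * ‖a‖ ^ 2)) with ht
    have ht0 : 0 ≤ t := le_max_left _ _
    refine ⟨((t:ℂ) * Complex.I) • a, ?_⟩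
    simp only [LinearMap.id_apply]
    have hcalc : ⟪((t:ℂ) * Complex.I) • a, ((t:ℂ) * Complex.I) • a⟫_ℂ
        - ⟪((t:ℂ) * Complex.I) • a, ((t:ℂ) * Complex.I) • a⟫_ℂ
        + ⟪a, ((t:ℂ) * Complex.I) • a⟫_ℂ - ⟪((t:ℂ) * Complex.I) • a, a⟫_ℂ
        = (2 * (t:ℂ) * Complex.I) * ⟪a, a⟫_ℂ := by
      simp only [inner_smul_left, inner_smul_right, map_mul,
        Complex.conj_ofReal, Complex.conj_I]
      ring
    rw [hcalc]
    have h2 : ⟪a, a⟫_ℂ = ((‖a‖ : ℂ)) ^ 2 := inner_self_eq_norm_sq_to_K (𝕜 := ℂ) a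
    have h3 : ‖(2 * (t:ℂ) * Complex.I) * ⟪a, a⟫_ℂ‖ = t * (2 * ‖a‖ ^ 2) := by
      rw [h2]
      simp only [norm_mul, norm_pow, Complex.norm_real, Complex.norm_I, Complex.norm_two,
        Real.norm_eq_abs, norm_norm, abs_of_nonneg ht0, abs_norm]
      ring
    rw [h3]
    have ht1 : K / (2 * ‖a‖ ^ 2) ≤ t := le_max_right _ _
    rw [div_le_iff₀ (by positivity)] at ht1
    linarith
  · have : ¬ ∀ x, ⟪A x, x⟫_ℂ = ⟪(LinearMap.id : EuclideanSpace ℂ (Fin m) →ₗ[ℂ] _) x, x⟫_ℂ := by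
      rw [ext_inner_map]; exact hA
    push_neg at this
    obtain ⟨v, hv⟩ := this
    set c : ℂ := ⟪A v, v⟫_ℂ - ⟪v, v⟫_ℂ with hc
    have hc0 : c ≠ 0 := sub_ne_zero.mpr (by simpa using hv)
    set d : ℂ := ⟪A a, v⟫_ℂ - ⟪v, a⟫_ℂ with hd
    have hcpos : 0 < ‖c‖ := norm_pos_iff.mpr hc0
    set t : ℝ := max 1 ((max K 0 + ‖d‖) / ‖c‖) with ht
    have ht1 : (1:ℝ) ≤ t := le_max_left _ _
    have ht2 : (max K 0 + ‖d‖) / ‖c‖ ≤ t := le_max_right _ _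
    refine ⟨(t : ℂ) • v, ?_⟩
    have hcalc : ⟪A ((t:ℂ) • v), (t:ℂ) • v⟫_ℂ - ⟪(t:ℂ) • v, (t:ℂ) • v⟫_ℂ
        + ⟪A a, (t:ℂ) • v⟫_ℂ - ⟪(t:ℂ) • v, a⟫_ℂ
        = (t:ℂ)^2 * c + (t:ℂ) * d := by
      simp only [map_smul, inner_smul_left, inner_smul_right, Complex.conj_ofReal, hc, hd]
      ring
    rw [hcalc]
    have hge : t ^ 2 * ‖c‖ - t * ‖d‖
        ≤ ‖(t:ℂ)^2 * c + (t:ℂ) * d‖ := by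
      have hnn := norm_sub_norm_le ((t:ℂ)^2 * c) (-((t:ℂ) * d))
      simp only [norm_neg, sub_neg_eq_add] at hnn
      calc t ^ 2 * ‖c‖ - t * ‖d‖
          ≤ ‖(t:ℂ)^2 * c‖ - ‖(t:ℂ) * d‖ := by
            simp [norm_mul, norm_pow, Complex.norm_real,
              abs_of_nonneg (by linarith : (0:ℝ) ≤ t)]
        _ ≤ _ := hnn
    refine le_trans ?_ hge
    have htc : max K 0 + ‖d‖ ≤ t * ‖c‖ := by
      rw [div_le_iff₀ hcpos] at ht2; linarith
    have hK : K ≤ max K 0 := le_max_left K 0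
    have hnn : 0 ≤ t * ‖c‖ - ‖d‖ := by
      have := le_max_right K 0; linarith
    nlinarith [mul_nonneg (sub_nonneg.mpr ht1) hnn]

/-- Proposition 6.4 (`prop:heisenberg`): a parabolic isometry `γ` of `ℍⁿ_ℂ` fixing `∞`,
induced by a matrix with rows `(1, a*, z₀)`, `(0, A, b)`, `(0,0,1)` with `A ∈ U(n-1)` and
`Aa = b`, preserving the Hermitian form, is uniformly translating (its displacement is
constant on every horosphere `q = -s`, `s > 0`, centred at `∞`) if and only if it is a
vertical Heisenberg translation (`A = I` and `a = 0`); and if it is not a vertical Heisenberg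
translation, then its displacement function is unbounded on every such horosphere. -/
theorem parabolic_uniformly_translating_iff_vertical
    (n : ℕ) (hn : 2 ≤ n) (z₀ : ℂ) (a : EuclideanSpace ℂ (Fin (n - 1)))
    (A : EuclideanSpace ℂ (Fin (n - 1)) →ₗ[ℂ] EuclideanSpace ℂ (Fin (n - 1)))
    (hA : ∀ v w : EuclideanSpace ℂ (Fin (n - 1)), (inner ℂ (A v) (A w) : ℂ) = inner ℂ v w)
    (hiso : ∀ V W : ℂ × EuclideanSpace ℂ (Fin (n - 1)) × ℂ,
      herm (parab z₀ a A V) (parab z₀ a A W) = herm V W) :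
    ((∀ s : ℝ, 0 < s →
        ∀ (w₀ w₀' : ℂ) (w w' : EuclideanSpace ℂ (Fin (n - 1))),
          herm ((w₀, w, 1) : ℂ × EuclideanSpace ℂ (Fin (n - 1)) × ℂ) (w₀, w, 1) = -s →
          herm ((w₀', w', 1) : ℂ × EuclideanSpace ℂ (Fin (n - 1)) × ℂ) (w₀', w', 1) = -s →
          chDist (w₀, w, 1) (parab z₀ a A (w₀, w, 1))
            = chDist (w₀', w', 1) (parab z₀ a A (w₀', w', 1)))
      ↔ (A = LinearMap.id ∧ a = 0)) ∧
    (¬(A = LinearMap.id ∧ a = 0) →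
      ∀ s : ℝ, 0 < s → ∀ M : ℝ, ∃ (w₀ : ℂ) (w : EuclideanSpace ℂ (Fin (n - 1))),
        herm ((w₀, w, 1) : ℂ × EuclideanSpace ℂ (Fin (n - 1)) × ℂ) (w₀, w, 1) = -s ∧
        M < chDist (w₀, w, 1) (parab z₀ a A (w₀, w, 1))) := by
  have hub : ¬(A = LinearMap.id ∧ a = 0) →
      ∀ s : ℝ, 0 < s → ∀ M : ℝ, ∃ (w₀ : ℂ) (w : EuclideanSpace ℂ (Fin (n - 1))),
        herm ((w₀, w, 1) : ℂ × EuclideanSpace ℂ (Fin (n - 1)) × ℂ) (w₀, w, 1) = -s ∧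
        M < chDist (w₀, w, 1) (parab z₀ a A (w₀, w, 1)) := by
    intro hne s hs M
    obtain ⟨w, hw⟩ := g_unbounded A a hne
      (s * (Real.exp M + 1) + ‖(s : ℂ) + conj z₀‖)
    set w₀ : ℂ := (((‖w‖ ^ 2 + s) / 2 : ℝ) : ℂ) with hw₀
    have hww : ⟪w, w⟫_ℂ = ((‖w‖ : ℂ)) ^ 2 := inner_self_eq_norm_sq_to_K (𝕜 := ℂ) w
    have hxx : herm ((w₀, w, 1) : ℂ × EuclideanSpace ℂ (Fin (n-1)) × ℂ) (w₀, w, 1) = -s := by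
      rw [herm_self_pt, hww, hw₀, Complex.conj_ofReal]
      push_cast
      ring
    refine ⟨w₀, w, hxx, ?_⟩
    set x : ℂ × EuclideanSpace ℂ (Fin (n-1)) × ℂ := (w₀, w, 1) with hx
    set g : ℂ := ⟪A w, w⟫_ℂ - ⟪w, w⟫_ℂ + ⟪A a, w⟫_ℂ - ⟪w, a⟫_ℂ with hg
    have hkey : herm x (parab z₀ a A x) = g - ((s:ℂ) + conj z₀) := by
      rw [hx, herm_parab_pt, hww, hw₀, Complex.conj_ofReal, hg, hww]
      push_cast
      ring
    have hyy : herm (parab z₀ a A x) (parab z₀ a A x) = -s := (hiso x x).trans hxx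
    -- lower bound on |herm x γx|
    have habs : s * (Real.exp M + 1) ≤ ‖herm x (parab z₀ a A x)‖ := by
      rw [hkey]
      have := norm_sub_norm_le g ((s:ℂ) + conj z₀)
      linarith
    -- compute chDist
    have hsq : Real.sqrt (Complex.normSq (herm x (parab z₀ a A x))
        / ((herm x x).re * (herm (parab z₀ a A x) (parab z₀ a A x)).re))
        = ‖herm x (parab z₀ a A x)‖ / s := by
      rw [hxx, hyy]
      simp only [Complex.neg_re, Complex.ofReal_re, neg_mul_neg]
      rw [show s * s = s ^ 2 by ring, Real.sqrt_div (Complex.normSq_nonneg _),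
        Real.sqrt_sq hs.le, ← Complex.norm_def]
    -- conclude
    have ht : Real.exp M + 1 ≤ ‖herm x (parab z₀ a A x)‖ / s :=
      (le_div_iff₀ hs).mpr (by linarith)
    have htpos : 0 < ‖herm x (parab z₀ a A x)‖ / s := by
      have := Real.exp_pos M; linarith
    have hlog : M < Real.log (‖herm x (parab z₀ a A x)‖ / s) := by
      rw [Real.lt_log_iff_exp_lt htpos]
      have := Real.exp_pos M; linarith
    show M < chDist x (parab z₀ a A x)
    rw [chDist, hsq, arcosh]
    have harc : Real.log (‖herm x (parab z₀ a A x)‖ / s)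
        ≤ Real.log (‖herm x (parab z₀ a A x)‖ / s
          + Real.sqrt ((‖herm x (parab z₀ a A x)‖ / s) ^ 2 - 1)) := by
      apply Real.log_le_log htpos
      exact le_add_of_nonneg_right (Real.sqrt_nonneg _)
    linarith
  refine ⟨⟨?_, ?_⟩, hub⟩
  · intro hconst
    by_contra hne
    obtain ⟨w₀, w, hh, hlt⟩ := hub hne 1 one_pos
      (chDist ((((1:ℝ)/2 : ℝ) : ℂ), (0 : EuclideanSpace ℂ (Fin (n-1))), 1)
        (parab z₀ a A ((((1:ℝ)/2 : ℝ) : ℂ), (0 : EuclideanSpace ℂ (Fin (n-1))), 1)))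
    have hbase : herm (((((1:ℝ)/2 : ℝ) : ℂ), (0 : EuclideanSpace ℂ (Fin (n-1))), 1) :
        ℂ × EuclideanSpace ℂ (Fin (n-1)) × ℂ) ((((1:ℝ)/2 : ℝ) : ℂ), 0, 1) = -(1:ℝ) := by
      rw [herm_self_pt, Complex.conj_ofReal]
      simp
      norm_num
    have heq := hconst 1 one_pos w₀ (((1:ℝ)/2 : ℝ) : ℂ) w 0 hh hbase
    rw [heq] at hlt
    exact lt_irrefl _ hlt
  · rintro ⟨rfl, rfl⟩
    intro s hs w₀ w₀' w w' h1 h2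
    have e : ∀ (u₀ : ℂ) (u : EuclideanSpace ℂ (Fin (n-1))),
        herm ((u₀, u, 1) : ℂ × EuclideanSpace ℂ (Fin (n-1)) × ℂ) (u₀, u, 1) = -s →
        herm ((u₀, u, 1) : ℂ × EuclideanSpace ℂ (Fin (n-1)) × ℂ)
          (parab z₀ 0 LinearMap.id (u₀, u, 1)) = -s - conj z₀ := by
      intro u₀ u hu
      rw [herm_self_pt] at hu
      rw [herm_parab_pt, hu]
      simp
    have k1 : herm (parab z₀ 0 LinearMap.id (w₀, w, 1))
        (parab z₀ 0 LinearMap.id (w₀, w, 1)) = -(s:ℂ) := (hiso _ _).trans h1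
    have k2 : herm (parab z₀ 0 LinearMap.id (w₀', w', 1))
        (parab z₀ 0 LinearMap.id (w₀', w', 1)) = -(s:ℂ) := (hiso _ _).trans h2
    rw [chDist, chDist, e w₀ w h1, e w₀' w' h2, h1, h2, k1, k2]
end
end
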